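/- Let V be a d×n real matrix with columns v_1,…,v_n, s an integer with 1 ≤ s ≤ d, and Ŝ ⊆ {1,…,n} with |Ŝ| = s such that {v_ℓ}_{ℓ∈Ŝ} are linearly independent. Let X = ∑_{ℓ∈Ŝ} v_ℓ v_ℓᵀ and let P be the Moore–Penrose pseudoinverse of X. Suppose Ŝ is locally optimal for MESP: for every i ∈ Ŝ and j ∈ {1,…,n}∖Ŝ, the determinant of the Gram matrix of {v_ℓ}_{ℓ ∈ Ŝ∪{j}∖{i}} is at most the determinant of the Gram matrix of {v_ℓ}_{ℓ∈Ŝ}. Then for every i ∈ Ŝ and j ∈ {1,…,n}∖Ŝ: 1 ≥ (v_iᵀ P P v_i) · v_jᵀ (I_d − P X) v_j + (v_jᵀ P v_i)². -/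

import Mathlib

open Matrix Finset

noncomputable section

/-- `lam` lists the eigenvalues (with multiplicity) of the real symmetric matrix `X`,
via an orthogonal spectral decomposition. -/
def IsSpectralDecomp {m : Type*} [Fintype m] [DecidableEq m]
    (X : Matrix m m ℝ) (lam : m → ℝ) : Prop :=
  ∃ Q : Matrix m m ℝ, Q * Qᵀ = 1 ∧ X = Q * Matrix.diagonal lam * Qᵀ

/-- Principal submatrix `C_{S,S}`. -/
def subSub {n : ℕ} (C : Matrix (Fin n) (Fin n) ℝ) (S : Finset (Fin n)) :
    Matrix {i // i ∈ S} {i // i ∈ S} ℝ :=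
  Matrix.of fun a b => C a.1 b.1

/-- The value `λ_{i+1}` (1-based), i.e. the coordinate of `lam` of 0-based index `i`;
`0` when out of range. -/
def extVal {d : ℕ} (lam : Fin d → ℝ) : ℕ → ℝ :=
  fun i => if h : i < d then lam ⟨i, h⟩ else 0

/-- `∑_{i=k+1}^d λ_i` (1-based), i.e. the sum of the coordinates of 0-based index `≥ k`. -/
def tailSum {d : ℕ} (lam : Fin d → ℝ) (k : ℕ) : ℝ :=
  ∑ i ∈ Finset.univ.filter (fun i : Fin d => k ≤ (i : ℕ)), lam i

/-- `k = k(λ, s)`: an integer `0 ≤ k < s` with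
`λ_k > (1/(s-k)) ∑_{i=k+1}^d λ_i ≥ λ_{k+1}`, with the convention `λ₀ = +∞`. -/
def IsKIndex {d : ℕ} (lam : Fin d → ℝ) (s k : ℕ) : Prop :=
  k < s ∧ extVal lam k ≤ tailSum lam k / ((s : ℝ) - k) ∧
    (k = 0 ∨ tailSum lam k / ((s : ℝ) - k) < extVal lam (k - 1))

/-- `P` is the Moore–Penrose pseudoinverse of `X`. -/
def IsPseudoInv {d : ℕ} (X P : Matrix (Fin d) (Fin d) ℝ) : Prop :=
  X * P * X = X ∧ P * X * P = P ∧ (X * P)ᵀ = X * P ∧ (P * X)ᵀ = P * X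

lemma det_rank2 {m : Type*} [Fintype m] [DecidableEq m]
    (A : Matrix m m ℝ) (hA : IsUnit A.det) (hsymm : Aᵀ = A) (e u : m → ℝ) (β : ℝ) :
    (A + (vecMulVec e u + β • vecMulVec e e + vecMulVec u e)).det =
      A.det * ((1 + u ⬝ᵥ A⁻¹ *ᵥ e) ^ 2 + (e ⬝ᵥ A⁻¹ *ᵥ e) * (β - u ⬝ᵥ A⁻¹ *ᵥ u)) := by
  have hGsymm : (A⁻¹)ᵀ = A⁻¹ := by rw [Matrix.transpose_nonsing_inv, hsymm]
  have hAG : A * A⁻¹ = 1 := Matrix.mul_nonsing_inv A hA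
  set G := A⁻¹ with hG
  -- rank-2 factors
  set C : Matrix m (Fin 2) ℝ := Matrix.of (fun a k => if k = 0 then e a else u a) with hC
  set D : Matrix m (Fin 2) ℝ := Matrix.of (fun a k => if k = 0 then u a + β * e a else e a) with hD
  have hCD : C * Dᵀ = vecMulVec e u + β • vecMulVec e e + vecMulVec u e := by
    ext a b
    simp [hC, hD, Matrix.mul_apply, Fin.sum_univ_two, vecMulVec_apply]
    ring
  have hfact : A + (vecMulVec e u + β • vecMulVec e e + vecMulVec u e)
      = A * (1 + (G * C) * Dᵀ) := by
    rw [Matrix.mul_add, mul_one]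
    simp only [← Matrix.mul_assoc]
    rw [hAG, Matrix.one_mul, hCD]
  rw [hfact, Matrix.det_mul, Matrix.det_one_add_mul_comm]
  congr 1
  -- compute the 2×2 determinant
  have hentry : ∀ k l : Fin 2, (Dᵀ * (G * C)) k l
      = (fun a => D a k) ⬝ᵥ (G *ᵥ (fun a => C a l)) := by
    intro k l
    simp only [Matrix.mul_apply, Matrix.transpose_apply, dotProduct, Matrix.mulVec, dotProduct,
      Finset.mul_sum]
  rw [Matrix.det_fin_two]
  have h00 : (Dᵀ * (G * C)) 0 0 = u ⬝ᵥ G *ᵥ e + β * (e ⬝ᵥ G *ᵥ e) := by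
    rw [hentry]
    simp only [hC, hD, Matrix.of_apply, if_pos rfl, if_true]
    rw [show (fun a => u a + β * e a) = u + β • e from rfl, add_dotProduct, smul_dotProduct]
    simp
  have h01 : (Dᵀ * (G * C)) 0 1 = u ⬝ᵥ G *ᵥ u + β * (e ⬝ᵥ G *ᵥ u) := by
    rw [hentry]
    simp only [hC, hD, Matrix.of_apply, if_pos rfl, if_true, if_neg (by norm_num : (1 : Fin 2) ≠ 0)]
    rw [show (fun a => u a + β * e a) = u + β • e from rfl, add_dotProduct, smul_dotProduct]
    simp
  have h10 : (Dᵀ * (G * C)) 1 0 = e ⬝ᵥ G *ᵥ e := by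
    rw [hentry]; simp only [hC, hD, Matrix.of_apply, if_pos rfl, if_true,
      if_neg (by norm_num : (1 : Fin 2) ≠ 0)]
  have h11 : (Dᵀ * (G * C)) 1 1 = e ⬝ᵥ G *ᵥ u := by
    rw [hentry]; simp only [hC, hD, Matrix.of_apply, if_true,
      if_neg (by norm_num : (1 : Fin 2) ≠ 0)]
  have hsy : e ⬝ᵥ G *ᵥ u = u ⬝ᵥ G *ᵥ e := by
    rw [show G *ᵥ u = u ᵥ* G by rw [← Matrix.vecMul_transpose, hGsymm], dotProduct_comm,
      ← Matrix.dotProduct_mulVec]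
  simp only [Matrix.add_apply, Matrix.one_apply_eq, Matrix.one_apply_ne (by norm_num : (0 : Fin 2) ≠ 1),
    Matrix.one_apply_ne (by norm_num : (1 : Fin 2) ≠ 0), h00, h01, h10, h11, hsy]
  ring

lemma pinv_unique {d : ℕ} {X P Q : Matrix (Fin d) (Fin d) ℝ}
    (hP : IsPseudoInv X P) (hQ : IsPseudoInv X Q) : P = Q := by
  obtain ⟨hP1, hP2, hP3, hP4⟩ := hP
  obtain ⟨hQ1, hQ2, hQ3, hQ4⟩ := hQ
  have hPX : P * X = Q * X := by
    calc P * X = (P * X)ᵀ := hP4.symm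
    _ = Xᵀ * Pᵀ := by rw [Matrix.transpose_mul]
    _ = (X * Q * X)ᵀ * Pᵀ := by rw [hQ1]
    _ = (Xᵀ * Qᵀ) * (Xᵀ * Pᵀ) := by
        simp only [Matrix.transpose_mul, Matrix.mul_assoc]
    _ = (Q * X)ᵀ * (P * X)ᵀ := by rw [Matrix.transpose_mul, Matrix.transpose_mul]
    _ = (Q * X) * (P * X) := by rw [hQ4, hP4]
    _ = Q * (X * P * X) := by rw [Matrix.mul_assoc, Matrix.mul_assoc]
    _ = Q * X := by rw [hP1]
  have hXP : X * P = X * Q := by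
    calc X * P = (X * P)ᵀ := hP3.symm
    _ = Pᵀ * Xᵀ := by rw [Matrix.transpose_mul]
    _ = Pᵀ * (X * Q * X)ᵀ := by rw [hQ1]
    _ = (Pᵀ * Xᵀ) * (Qᵀ * Xᵀ) := by
        simp only [Matrix.transpose_mul, Matrix.mul_assoc]
    _ = (X * P)ᵀ * (X * Q)ᵀ := by rw [Matrix.transpose_mul, Matrix.transpose_mul]
    _ = (X * P) * (X * Q) := by rw [hQ3, hP3]
    _ = (X * P * X) * Q := by simp only [Matrix.mul_assoc]
    _ = X * Q := by rw [hP1]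
  calc P = P * X * P := hP2.symm
  _ = Q * X * P := by rw [hPX]
  _ = Q * (X * P) := by rw [Matrix.mul_assoc]
  _ = Q * (X * Q) := by rw [hXP]
  _ = Q * X * Q := by rw [Matrix.mul_assoc]
  _ = Q := hQ2


/-- If `Ŝ` is locally optimal for MESP, then for every `i ∈ Ŝ` and
`j ∉ Ŝ`: `1 ≥ (vᵢᵀ P² vᵢ) · vⱼᵀ(I − PX)vⱼ + (vⱼᵀ P vᵢ)²`, where `X = ∑_{ℓ∈Ŝ} v_ℓ v_ℓᵀ`
and `P = X†`. -/
theorem stmt_11 (d n s : ℕ) (hs1 : 1 ≤ s) (hsd : s ≤ d)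
    (V : Matrix (Fin d) (Fin n) ℝ) (Shat : Finset (Fin n)) (hcard : Shat.card = s)
    (hlin : LinearIndependent ℝ (fun i : {x // x ∈ Shat} => (fun a => V a i.1)))
    (X P : Matrix (Fin d) (Fin d) ℝ)
    (hX : X = ∑ i ∈ Shat, vecMulVec (fun a => V a i) (fun a => V a i))
    (hP : IsPseudoInv X P)
    (hloc : ∀ i ∈ Shat, ∀ j ∉ Shat,
      (subSub (Vᵀ * V) (insert j (Shat.erase i))).det ≤ (subSub (Vᵀ * V) Shat).det) :
    ∀ i ∈ Shat, ∀ j ∉ Shat,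
      ((fun a => V a i) ⬝ᵥ ((P * P) *ᵥ fun a => V a i)) *
          ((fun a => V a j) ⬝ᵥ ((1 - P * X) *ᵥ fun a => V a j)) +
        ((fun a => V a j) ⬝ᵥ (P *ᵥ fun a => V a i)) ^ 2 ≤ 1 := by
  intro i hi j hj
  set B : Matrix (Fin d) {x // x ∈ Shat} ℝ := Matrix.of (fun a ℓ => V a ℓ.1) with hB
  set A : Matrix {x // x ∈ Shat} {x // x ∈ Shat} ℝ := Bᵀ * B with hA
  have hAsymm : Aᵀ = A := by
    rw [hA, Matrix.transpose_mul, Matrix.transpose_transpose]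
  -- B *ᵥ x ≠ 0 for x ≠ 0
  have hBinj : ∀ x : {x // x ∈ Shat} → ℝ, B *ᵥ x = 0 → x = 0 := by
    intro x hx0
    have h := Fintype.linearIndependent_iff.mp hlin x ?_
    · funext ℓ; exact h ℓ
    · funext a
      have : (B *ᵥ x) a = 0 := by rw [hx0]; rfl
      simpa [Matrix.mulVec, dotProduct, Finset.sum_apply, hB, mul_comm] using this
  have hApd : A.PosDef := by
    rw [Matrix.posDef_iff_dotProduct_mulVec]
    constructor
    · show Aᴴ = A
      have : Aᴴ = Aᵀ := by ext a c; simp [Matrix.conjTranspose_apply]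
      rw [this, hAsymm]
    · intro x hx
      have hsx : star x = x := funext fun a => star_trivial _
      have hAx : star x ⬝ᵥ A *ᵥ x = (B *ᵥ x) ⬝ᵥ (B *ᵥ x) := by
        rw [hsx, hA, ← Matrix.mulVec_mulVec, Matrix.dotProduct_mulVec,
          Matrix.vecMul_transpose]
      rw [hAx]
      rcases lt_or_eq_of_le (Finset.sum_nonneg fun a _ => mul_self_nonneg ((B *ᵥ x) a)) with h | h
      · exact h
      · exfalso
        exact hx (hBinj x (dotProduct_self_eq_zero.mp h.symm))
  have hdetpos : 0 < A.det := hApd.det_pos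
  have hAu : IsUnit A.det := isUnit_iff_ne_zero.mpr (ne_of_gt hdetpos)
  set G : Matrix {x // x ∈ Shat} {x // x ∈ Shat} ℝ := A⁻¹ with hG
  have hGsymm : Gᵀ = G := by rw [hG, Matrix.transpose_nonsing_inv, hAsymm]
  have hAG : A * G = 1 := Matrix.mul_nonsing_inv A hAu
  have hGA : G * A = 1 := Matrix.nonsing_inv_mul A hAu
  have g1 : Bᵀ * B = A := hA.symm
  have r1 : ∀ {κ : Type} [Fintype κ] (M : Matrix {x // x ∈ Shat} κ ℝ),
      Bᵀ * (B * M) = A * M := fun M => by rw [← Matrix.mul_assoc, g1]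
  have r2 : ∀ {κ : Type} [Fintype κ] (M : Matrix {x // x ∈ Shat} κ ℝ),
      A * (G * M) = M := fun M => by rw [← Matrix.mul_assoc, hAG, Matrix.one_mul]
  have r3 : ∀ {κ : Type} [Fintype κ] (M : Matrix {x // x ∈ Shat} κ ℝ),
      G * (A * M) = M := fun M => by rw [← Matrix.mul_assoc, hGA, Matrix.one_mul]
  have hXBB : X = B * Bᵀ := by
    rw [hX]; ext a c
    rw [Matrix.sum_apply, Matrix.mul_apply, ← Finset.sum_coe_sort Shat]
    exact Finset.sum_congr rfl fun ℓ _ => by simp [vecMulVec_apply, hB]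
  set P₀ : Matrix (Fin d) (Fin d) ℝ := B * G * G * Bᵀ with hP₀
  have hXP0 : X * P₀ = B * (G * Bᵀ) := by
    rw [hXBB, hP₀]; simp only [Matrix.mul_assoc]; rw [r1, r2]
  have hP0X : P₀ * X = B * (G * Bᵀ) := by
    rw [hXBB, hP₀]; simp only [Matrix.mul_assoc]; rw [r1, r3]
  have hP0 : IsPseudoInv X P₀ := by
    refine ⟨?_, ?_, ?_, ?_⟩
    · rw [hXP0, hXBB]; simp only [Matrix.mul_assoc]; rw [r1, r3]
    · rw [hP0X, hP₀]; simp only [Matrix.mul_assoc]; rw [r1, r2]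
    · rw [hXP0]
      simp only [Matrix.transpose_mul, Matrix.transpose_transpose, hGsymm, Matrix.mul_assoc]
    · rw [hP0X]
      simp only [Matrix.transpose_mul, Matrix.transpose_transpose, hGsymm, Matrix.mul_assoc]
  have hPP0 : P = P₀ := pinv_unique hP hP0
  -- vectors
  set i' : {x // x ∈ Shat} := ⟨i, hi⟩ with hi'
  set ei : {x // x ∈ Shat} → ℝ := Pi.single i' 1 with hei
  have hvi : (fun a => V a i) = B *ᵥ ei := by
    funext a; rw [hei, Matrix.mulVec_single]; simp [hB, hi']
  set vj : Fin d → ℝ := fun a => V a j with hvj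
  set b : {x // x ∈ Shat} → ℝ := Bᵀ *ᵥ vj with hb
  have hBdot : ∀ (w : Fin d → ℝ) (z : {x // x ∈ Shat} → ℝ),
      w ⬝ᵥ (B *ᵥ z) = (Bᵀ *ᵥ w) ⬝ᵥ z := by
    intro w z
    rw [Matrix.dotProduct_mulVec, Matrix.mulVec_transpose]
  have hsymdotA : ∀ x z : {x // x ∈ Shat} → ℝ, (A *ᵥ x) ⬝ᵥ z = x ⬝ᵥ A *ᵥ z := by
    intro x z
    have hxA : A *ᵥ x = x ᵥ* A := by rw [← Matrix.vecMul_transpose, hAsymm]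
    rw [hxA, ← Matrix.dotProduct_mulVec]
  -- scalar 1
  have hPPB : P₀ * P₀ * B = B * (G * G) := by
    rw [hP₀]; simp only [Matrix.mul_assoc]; rw [g1, r1, r2, hGA, Matrix.mul_one]
  have s1 : ((fun a => V a i) ⬝ᵥ ((P * P) *ᵥ fun a => V a i)) = ei ⬝ᵥ G *ᵥ ei := by
    rw [hPP0, hvi, Matrix.mulVec_mulVec, hPPB, ← Matrix.mulVec_mulVec, hBdot,
      Matrix.mulVec_mulVec, g1, hsymdotA, Matrix.mulVec_mulVec, r2]
  -- scalar 3
  have hP0B : P₀ * B = B * G := by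
    rw [hP₀]; simp only [Matrix.mul_assoc]; rw [g1, hGA, Matrix.mul_one]
  have s3 : (vj ⬝ᵥ (P *ᵥ fun a => V a i)) = b ⬝ᵥ G *ᵥ ei := by
    rw [hPP0, hvi, Matrix.mulVec_mulVec, hP0B, ← Matrix.mulVec_mulVec, hBdot, ← hb]
  -- scalar 2
  have s2 : (vj ⬝ᵥ ((1 - P * X) *ᵥ vj)) = vj ⬝ᵥ vj - b ⬝ᵥ G *ᵥ b := by
    rw [hPP0, hP0X, Matrix.sub_mulVec, Matrix.one_mulVec, dotProduct_sub,
      ← Matrix.mulVec_mulVec, ← Matrix.mulVec_mulVec, hBdot, ← hb]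
  -- determinant part
  set w : Fin d → ℝ := vj - B *ᵥ ei with hw
  set u : {x // x ∈ Shat} → ℝ := b - A *ᵥ ei with hu
  set β : ℝ := w ⬝ᵥ w with hβ
  set B' : Matrix (Fin d) {x // x ∈ Shat} ℝ :=
    Matrix.of (fun a ℓ => if ℓ = i' then V a j else V a ℓ.1) with hB'
  have hB'eq : B' = B + vecMulVec w ei := by
    ext a ℓ
    by_cases h : ℓ = i'
    · subst h
      simp [hB', hB, hw, hei, vecMulVec_apply, Pi.single_eq_same, hvj, hi']
    · simp [hB', hB, hw, hei, vecMulVec_apply, Pi.single_eq_of_ne h, h]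
  have hBw : Bᵀ *ᵥ w = u := by
    rw [hw, Matrix.mulVec_sub, Matrix.mulVec_mulVec, g1, ← hb, ← hu]
  have hWt : (vecMulVec w ei)ᵀ = vecMulVec ei w := by
    ext a c; simp [vecMulVec_apply, mul_comm]
  have hBtW : Bᵀ * vecMulVec w ei = vecMulVec u ei := by
    ext ℓ ℓ'
    simp only [Matrix.mul_apply, vecMulVec_apply, Matrix.transpose_apply]
    calc ∑ a, B a ℓ * (w a * ei ℓ') = (∑ a, B a ℓ * w a) * ei ℓ' := by
          rw [Finset.sum_mul]; exact Finset.sum_congr rfl fun a _ => by ring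
    _ = (Bᵀ *ᵥ w) ℓ * ei ℓ' := rfl
    _ = u ℓ * ei ℓ' := by rw [hBw]
  have hWtB : vecMulVec ei w * B = vecMulVec ei u := by
    ext ℓ ℓ'
    simp only [Matrix.mul_apply, vecMulVec_apply]
    calc ∑ a, ei ℓ * w a * B a ℓ' = ei ℓ * ∑ a, B a ℓ' * w a := by
          rw [Finset.mul_sum]; exact Finset.sum_congr rfl fun a _ => by ring
    _ = ei ℓ * (Bᵀ *ᵥ w) ℓ' := rfl
    _ = ei ℓ * u ℓ' := by rw [hBw]
  have hWtW : vecMulVec ei w * vecMulVec w ei = β • vecMulVec ei ei := by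
    ext ℓ ℓ'
    simp only [Matrix.mul_apply, vecMulVec_apply, Matrix.smul_apply, smul_eq_mul]
    calc ∑ a, ei ℓ * w a * (w a * ei ℓ') = (∑ a, w a * w a) * (ei ℓ * ei ℓ') := by
          rw [Finset.sum_mul]; exact Finset.sum_congr rfl fun a _ => by ring
    _ = β * (ei ℓ * ei ℓ') := rfl
  have hN : B'ᵀ * B' = A + (vecMulVec ei u + β • vecMulVec ei ei + vecMulVec u ei) := by
    rw [hB'eq, Matrix.transpose_add, hWt, Matrix.add_mul, Matrix.mul_add, Matrix.mul_add,
      g1, hBtW, hWtB, hWtW]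
    abel
  -- the index equivalence
  set T' : Finset (Fin n) := insert j (Shat.erase i) with hT'
  have hjT : j ∈ T' := Finset.mem_insert_self j _
  have hmemT : ∀ x : Fin n, x ∈ T' → x ≠ j → x ∈ Shat := by
    intro x hx hxj
    rcases Finset.mem_insert.mp hx with h | h
    · exact absurd h hxj
    · exact Finset.mem_of_mem_erase h
  have hmemT2 : ∀ ℓ : {x // x ∈ Shat}, ℓ ≠ i' → ℓ.1 ∈ T' := by
    intro ℓ hℓ
    exact Finset.mem_insert_of_mem
      (Finset.mem_erase.mpr ⟨fun hh => hℓ (Subtype.ext (by rw [hh, hi'])), ℓ.2⟩)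
  have hnei : ∀ (x : {x // x ∈ T'}) (h : x.1 ≠ j),
      (⟨x.1, hmemT x.1 x.2 h⟩ : {x // x ∈ Shat}) ≠ i' := by
    intro x h hc
    have hxi : x.1 = i := congrArg Subtype.val hc
    have hxe : x.1 ∈ Shat.erase i := by
      rcases Finset.mem_insert.mp x.2 with h' | h'
      · exact absurd h' h
      · exact h'
    exact (Finset.mem_erase.mp hxe).1 hxi
  set f : {x // x ∈ T'} ≃ {x // x ∈ Shat} :=
    { toFun := fun x => if h : x.1 = j then i' else ⟨x.1, hmemT x.1 x.2 h⟩
      invFun := fun ℓ => if h : ℓ = i' then ⟨j, hjT⟩ else ⟨ℓ.1, hmemT2 ℓ h⟩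
      left_inv := by
        intro x
        dsimp only
        by_cases h : x.1 = j
        · rw [dif_pos h, dif_pos rfl]
          exact Subtype.ext h.symm
        · rw [dif_neg h, dif_neg (hnei x h)]
      right_inv := by
        intro ℓ
        dsimp only
        by_cases h : ℓ = i'
        · rw [dif_pos h, dif_pos rfl, h]
        · rw [dif_neg h]
          have hlj : ℓ.1 ≠ j := fun hc => hj (hc ▸ ℓ.2)
          simp only [dif_neg hlj] } with hf
  have hcolB' : ∀ (x : {x // x ∈ T'}) (a : Fin d), B' a (f x) = V a x.1 := by
    intro x a
    by_cases h : x.1 = j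
    · simp only [hf, Equiv.coe_fn_mk, dif_pos h, hB', Matrix.of_apply]
      simp [h]
    · simp only [hf, Equiv.coe_fn_mk, dif_neg h, hB', Matrix.of_apply, if_neg (hnei x h)]
  have hsub1 : subSub (Vᵀ * V) Shat = A := by
    ext a c
    simp [subSub, hA, hB, Matrix.mul_apply]
  have hsub2 : subSub (Vᵀ * V) T' = (B'ᵀ * B').submatrix f f := by
    ext x y
    simp only [subSub, Matrix.of_apply, Matrix.submatrix_apply, Matrix.mul_apply,
      Matrix.transpose_apply]
    exact Finset.sum_congr rfl fun a _ => by rw [hcolB' x a, hcolB' y a]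
  have hdetle : (B'ᵀ * B').det ≤ A.det := by
    calc (B'ᵀ * B').det = (subSub (Vᵀ * V) T').det := by
          rw [hsub2, Matrix.det_submatrix_equiv_self]
    _ ≤ (subSub (Vᵀ * V) Shat).det := by rw [hT']; exact hloc i hi j hj
    _ = A.det := by rw [hsub1]
  have hdetformula : (B'ᵀ * B').det
      = A.det * ((1 + u ⬝ᵥ G *ᵥ ei) ^ 2 + (ei ⬝ᵥ G *ᵥ ei) * (β - u ⬝ᵥ G *ᵥ u)) := by
    rw [hN]
    exact det_rank2 A hAu hAsymm ei u β
  have hkey : (1 + u ⬝ᵥ G *ᵥ ei) ^ 2 + (ei ⬝ᵥ G *ᵥ ei) * (β - u ⬝ᵥ G *ᵥ u) ≤ 1 := by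
    rw [hdetformula] at hdetle
    nlinarith [hdetle, hdetpos]
  -- algebraic identification
  have hGb : G *ᵥ u = G *ᵥ b - ei := by
    have hGAei : G *ᵥ (A *ᵥ ei) = ei := by
      rw [Matrix.mulVec_mulVec, hGA, Matrix.one_mulVec]
    rw [hu, Matrix.mulVec_sub, hGAei]
  have hAei1 : (A *ᵥ ei) ⬝ᵥ (G *ᵥ ei) = 1 := by
    rw [hsymdotA, Matrix.mulVec_mulVec, hAG, Matrix.one_mulVec, hei]
    simp
  have h1p : 1 + u ⬝ᵥ G *ᵥ ei = b ⬝ᵥ G *ᵥ ei := by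
    rw [hu, sub_dotProduct, hAei1]; ring
  have hbei : vj ⬝ᵥ (B *ᵥ ei) = b ⬝ᵥ ei := hBdot vj ei
  have huGu : u ⬝ᵥ G *ᵥ u = b ⬝ᵥ G *ᵥ b - 2 * (b ⬝ᵥ ei) + ei ⬝ᵥ A *ᵥ ei := by
    rw [hGb, hu, sub_dotProduct, dotProduct_sub, dotProduct_sub]
    have h1 : (A *ᵥ ei) ⬝ᵥ (G *ᵥ b) = b ⬝ᵥ ei := by
      rw [hsymdotA, Matrix.mulVec_mulVec, hAG, Matrix.one_mulVec, dotProduct_comm]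
    have h2 : (A *ᵥ ei) ⬝ᵥ ei = ei ⬝ᵥ A *ᵥ ei := hsymdotA ei ei
    rw [h1, h2]; ring
  have hβval : β = vj ⬝ᵥ vj - 2 * (b ⬝ᵥ ei) + ei ⬝ᵥ A *ᵥ ei := by
    rw [hβ, hw, sub_dotProduct, dotProduct_sub, dotProduct_sub]
    have h1 : (B *ᵥ ei) ⬝ᵥ vj = b ⬝ᵥ ei := by
      rw [dotProduct_comm]; exact hBdot vj ei
    have h2 : (B *ᵥ ei) ⬝ᵥ (B *ᵥ ei) = ei ⬝ᵥ A *ᵥ ei := by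
      rw [hBdot, Matrix.mulVec_mulVec, g1, hsymdotA]
    rw [hbei, h1, h2]; ring
  have e1 : (1 + u ⬝ᵥ G *ᵥ ei) ^ 2 = (b ⬝ᵥ G *ᵥ ei) ^ 2 := by rw [h1p]
  have e2 : β - u ⬝ᵥ G *ᵥ u = vj ⬝ᵥ vj - b ⬝ᵥ G *ᵥ b := by
    rw [huGu, hβval]; ring
  rw [e1, e2] at hkey
  rw [s1, s2, s3]
  linarith
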